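/- Let n, t be natural numbers with t < n, and let x, y < 2^n. If x >>> (n − t) = y >>> (n − t) and x >>> (n − t − 1) ≠ y >>> (n − t − 1) (i.e., the common prefix length of the n-bit representations of x and y is exactly t), then 2^(n−t−1) ≤ (x XOR y) < 2^(n−t). -/

import Mathlib

lemma xor_shiftRight' (x y k : ℕ) : (x ^^^ y) >>> k = (x >>> k) ^^^ (y >>> k) := by
  apply Nat.eq_of_testBit_eq
  intro i
  simp [Nat.testBit_shiftRight, Nat.testBit_xor]

/-- If the common prefix length of the `n`-bit identifiers `x` and `y` is
exactly `t`, then their XOR distance lies in the band `[2^(n-t-1), 2^(n-t))`. -/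
theorem stmt5 (n t x y : ℕ) (ht : t < n) (hx : x < 2 ^ n) (hy : y < 2 ^ n)
    (h₁ : x >>> (n - t) = y >>> (n - t))
    (h₂ : x >>> (n - t - 1) ≠ y >>> (n - t - 1)) :
    2 ^ (n - t - 1) ≤ x ^^^ y ∧ x ^^^ y < 2 ^ (n - t) := by
  constructor
  · have h : (x ^^^ y) >>> (n - t - 1) ≠ 0 := by
      rw [xor_shiftRight']
      simpa [xor_eq_zero_iff] using h₂
    rw [Nat.shiftRight_eq_div_pow] at h
    have := Nat.one_le_iff_ne_zero.mpr h
    calc 2 ^ (n - t - 1) = 1 * 2 ^ (n - t - 1) := (one_mul _).symm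
      _ ≤ ((x ^^^ y) / 2 ^ (n - t - 1)) * 2 ^ (n - t - 1) :=
        Nat.mul_le_mul_right _ this
      _ ≤ x ^^^ y := Nat.div_mul_le_self _ _
  · have h : (x ^^^ y) >>> (n - t) = 0 := by
      rw [xor_shiftRight', h₁, Nat.xor_self]
    rw [Nat.shiftRight_eq_div_pow, Nat.div_eq_zero_iff_lt (Nat.pow_pos (n := n - t) (by norm_num))] at h
    exact h
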